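/- arXiv:1511.02368 — 3 statements merged into one kernel-verified Lean document; each statement's English description precedes it below -/
import Mathlib

section
/- Let A, B ∈ Mₙ(ℝ). The Sylvester operator X ↦ A·X + X·B on Mₙ(ℝ) is invertible if and only if for all eigenvalues λ of A and μ of B (over ℂ), λ + μ ≠ 0. -/
open Polynomial Matrix

/-- A scalar is in the spectrum of a matrix over a field iff it is a root of the
characteristic polynomial. -/
lemma mem_spectrum_iff_isRoot_charpoly {K : Type*} [Field K] {n : ℕ}
    (M : Matrix (Fin n) (Fin n) K) (μ : K) :
    μ ∈ spectrum K M ↔ M.charpoly.IsRoot μ := by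
  have hdet : M.charpoly.eval μ = ((algebraMap K (Matrix (Fin n) (Fin n) K)) μ - M).det := by
    rw [Matrix.charpoly, ← Polynomial.coe_evalRingHom, RingHom.map_det]
    congr 1
    ext i j
    by_cases hij : i = j <;>
      simp [charmatrix_apply, Matrix.algebraMap_matrix_apply, hij]
  rw [spectrum.mem_iff, Matrix.isUnit_iff_isUnit_det, Polynomial.IsRoot, hdet,
    isUnit_iff_ne_zero, not_not]

lemma aeval_comm {R : Type*} [CommRing R] {n : ℕ} (M N X : Matrix (Fin n) (Fin n) R)
    (h : M * X = X * N) (p : R[X]) :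
    (Polynomial.aeval M p) * X = X * (Polynomial.aeval N p) := by
  have hpow : ∀ k : ℕ, M ^ k * X = X * N ^ k := by
    intro k
    induction k with
    | zero => simp
    | succ k ih => rw [pow_succ, pow_succ, mul_assoc, h, ← mul_assoc, ih, mul_assoc]
  induction p using Polynomial.induction_on' with
  | add p q hp hq => simp [map_add, add_mul, mul_add, hp, hq]
  | monomial k a =>
      rw [aeval_monomial, aeval_monomial, mul_assoc, hpow, ← mul_assoc, ← mul_assoc,
        Algebra.commutes]

theorem stmt_3 (n : ℕ) (A B : Matrix (Fin n) (Fin n) ℝ) :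
    Function.Bijective (fun X : Matrix (Fin n) (Fin n) ℝ => A * X + X * B) ↔
    ∀ lam ∈ spectrum ℂ (A.map (algebraMap ℝ ℂ)),
      ∀ mu ∈ spectrum ℂ (B.map (algebraMap ℝ ℂ)), lam + mu ≠ 0 := by
  set A' := A.map (algebraMap ℝ ℂ) with hA'
  set B' := B.map (algebraMap ℝ ℂ) with hB'
  let S : Matrix (Fin n) (Fin n) ℝ →ₗ[ℝ] Matrix (Fin n) (Fin n) ℝ :=
    { toFun := fun X => A * X + X * B
      map_add' := by intro X Y; noncomm_ring
      map_smul' := by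
        intro c X
        simp [Matrix.mul_smul, Matrix.smul_mul, smul_add] }
  have hbij : Function.Bijective (fun X : Matrix (Fin n) (Fin n) ℝ => A * X + X * B) ↔
      Function.Injective S :=
    ⟨fun h => h.1, fun h => ⟨h, LinearMap.injective_iff_surjective.mp h⟩⟩
  rw [hbij]
  constructor
  · -- bijective → spectral condition
    intro hinj lam hlam mu hmu hsum
    -- eigenvector of A'
    have hvex : ∃ v, v ≠ 0 ∧ A' *ᵥ v = lam • v := by
      rw [spectrum.mem_iff, Matrix.isUnit_iff_isUnit_det, isUnit_iff_ne_zero, not_not] at hlam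
      obtain ⟨v, hv0, hv⟩ := (Matrix.exists_mulVec_eq_zero_iff).mpr hlam
      refine ⟨v, hv0, ?_⟩
      rw [Matrix.sub_mulVec, sub_eq_zero] at hv
      rw [← hv, Algebra.algebraMap_eq_smul_one, Matrix.smul_mulVec, Matrix.one_mulVec]
    -- left eigenvector of B'
    have hwex : ∃ w, w ≠ 0 ∧ B'ᵀ *ᵥ w = mu • w := by
      rw [spectrum.mem_iff, Matrix.isUnit_iff_isUnit_det, isUnit_iff_ne_zero, not_not] at hmu
      have hdet : ((algebraMap ℂ (Matrix (Fin n) (Fin n) ℂ)) mu - B'ᵀ).det = 0 := by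
        have : (algebraMap ℂ (Matrix (Fin n) (Fin n) ℂ)) mu - B'ᵀ =
            ((algebraMap ℂ (Matrix (Fin n) (Fin n) ℂ)) mu - B')ᵀ := by
          rw [Matrix.transpose_sub, Algebra.algebraMap_eq_smul_one,
            Matrix.transpose_smul, Matrix.transpose_one]
        rw [this, Matrix.det_transpose, hmu]
      obtain ⟨w, hw0, hw⟩ := (Matrix.exists_mulVec_eq_zero_iff).mpr hdet
      refine ⟨w, hw0, ?_⟩
      rw [Matrix.sub_mulVec, sub_eq_zero] at hw
      rw [← hw, Algebra.algebraMap_eq_smul_one, Matrix.smul_mulVec, Matrix.one_mulVec]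
    obtain ⟨v, hv0, hv⟩ := hvex
    obtain ⟨w, hw0, hw⟩ := hwex
    have hv' : ∀ i, ∑ k, A' i k * v k = lam * v i := fun i => by
      have := congrFun hv i
      simpa [Matrix.mulVec, dotProduct] using this
    have hw' : ∀ j, ∑ k, B' k j * w k = mu * w j := fun j => by
      have := congrFun hw j
      simpa [Matrix.mulVec, dotProduct, Matrix.transpose_apply] using this
    set X : Matrix (Fin n) (Fin n) ℂ := Matrix.vecMulVec v w with hXdef
    have hX : A' * X + X * B' = 0 := by
      ext i j
      simp only [Matrix.add_apply, Matrix.mul_apply, Matrix.vecMulVec_apply, Matrix.zero_apply,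
        hXdef]
      have e1 : ∑ k, A' i k * (v k * w j) = (∑ k, A' i k * v k) * w j := by
        rw [Finset.sum_mul]; exact Finset.sum_congr rfl (by intros; ring)
      have e2 : ∑ k, v i * w k * B' k j = v i * ∑ k, B' k j * w k := by
        rw [Finset.mul_sum]; exact Finset.sum_congr rfl (by intros; ring)
      rw [e1, e2, hv' i, hw' j]
      linear_combination (v i * w j) * hsum
    -- pass to real and imaginary parts
    obtain ⟨i0, hi0⟩ := Function.ne_iff.mp hv0
    obtain ⟨j0, hj0⟩ := Function.ne_iff.mp hw0
    have hXne : X i0 j0 ≠ 0 := by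
      simp only [hXdef, Matrix.vecMulVec_apply]
      exact mul_ne_zero hi0 hj0
    have hentry : ∀ i j, ∑ k, A' i k * X k j + ∑ k, X i k * B' k j = 0 := fun i j => by
      have := congrFun (congrFun hX i) j
      simpa [Matrix.add_apply, Matrix.mul_apply] using this
    have hre : A * (Matrix.of fun i j => (X i j).re) + (Matrix.of fun i j => (X i j).re) * B
        = 0 := by
      ext i j
      have := congrArg Complex.re (hentry i j)
      simp only [Complex.add_re, Complex.re_sum, Complex.mul_re, Complex.zero_re] at this
      simpa [Matrix.add_apply, Matrix.mul_apply, Matrix.of_apply, hA', hB',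
        Matrix.map_apply, Complex.ofReal_re, Complex.ofReal_im] using this
    have him : A * (Matrix.of fun i j => (X i j).im) + (Matrix.of fun i j => (X i j).im) * B
        = 0 := by
      ext i j
      have := congrArg Complex.im (hentry i j)
      simp only [Complex.add_im, Complex.im_sum, Complex.mul_im, Complex.zero_im] at this
      simpa [Matrix.add_apply, Matrix.mul_apply, Matrix.of_apply, hA', hB',
        Matrix.map_apply, Complex.ofReal_re, Complex.ofReal_im] using this
    have hker := (injective_iff_map_eq_zero S).mp hinj
    by_cases h0 : (X i0 j0).re = 0
    · have him0 : (X i0 j0).im ≠ 0 := by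
        intro h; exact hXne (Complex.ext h0 h)
      have hz := hker _ him
      apply him0
      have := congrFun (congrFun hz i0) j0
      simpa using this
    · have hz := hker _ hre
      apply h0
      have := congrFun (congrFun hz i0) j0
      simpa using this
  · -- spectral condition → injective
    intro hyp
    rw [injective_iff_map_eq_zero]
    intro X hXz
    rcases Nat.eq_zero_or_pos n with hn | hn
    · subst hn; ext i j; exact i.elim0
    have hXz' : A * X + X * B = 0 := hXz
    set X' := X.map (algebraMap ℝ ℂ) with hX'def
    have hmapped : A' * X' + X' * B' = 0 := by
      rw [hA', hB', hX'def, ← Matrix.map_mul, ← Matrix.map_mul, ← Matrix.map_add, hXz']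
      · simp
      · exact fun a b => map_add _ a b
    have hcomm : A' * X' = X' * (-B') := by
      rw [mul_neg]
      exact eq_neg_of_add_eq_zero_left hmapped
    set p := (-B').charpoly with hp
    have h1 : (Polynomial.aeval A' p) * X' = 0 := by
      rw [aeval_comm A' (-B') X' hcomm p, hp, Matrix.aeval_self_charpoly, mul_zero]
    have hdeg : 0 < p.degree := by
      rw [hp, Matrix.charpoly_degree_eq_dim, Fintype.card_fin]
      exact_mod_cast hn
    have hunit : IsUnit (Polynomial.aeval A' p) := by
      rw [← spectrum.zero_notMem_iff ℂ]
      intro hmem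
      rw [spectrum.map_polynomial_aeval_of_degree_pos A' p hdeg] at hmem
      obtain ⟨lam, hlamA, hev⟩ := hmem
      have hroot : lam ∈ spectrum ℂ (-B') :=
        (mem_spectrum_iff_isRoot_charpoly (-B') lam).mpr hev
      have hmu : -lam ∈ spectrum ℂ B' := by
        rw [spectrum.mem_iff] at hroot ⊢
        have hkey : (algebraMap ℂ (Matrix (Fin n) (Fin n) ℂ)) (-lam) - B'
            = -((algebraMap ℂ (Matrix (Fin n) (Fin n) ℂ)) lam - (-B')) := by
          rw [map_neg]; abel
        rw [hkey, IsUnit.neg_iff]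
        exact hroot
      exact hyp lam hlamA (-lam) hmu (by ring)
    obtain ⟨u, hu⟩ := hunit
    have hX'0 : X' = 0 := by
      calc X' = ↑u⁻¹ * (↑u * X') := by rw [← mul_assoc, Units.inv_mul, one_mul]
      _ = ↑u⁻¹ * ((Polynomial.aeval A') p * X') := by rw [hu]
      _ = 0 := by rw [h1, mul_zero]
    ext i j
    have hzz := congrFun (congrFun hX'0 i) j
    simp only [hX'def, Matrix.map_apply, Matrix.zero_apply] at hzz
    have hfin : X i j = 0 := (algebraMap ℝ ℂ).injective (by simpa using hzz)
    simpa using hfin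
end

section
/- Let A, B ∈ Mₙ(ℂ) and let φ(x,y) = Σ_{j,k} α_{j,k} x^j y^k be a polynomial in two variables. The linear operator G : Mₙ(ℂ) → Mₙ(ℂ) defined by G(X) = Σ_{j,k} α_{j,k} A^j X B^k is singular (non-invertible) if and only if φ(λ, μ) = 0 for some eigenvalue λ of A and some eigenvalue μ of Bᵀ. -/
open Matrix

private lemma spec_iff {n : ℕ} (M : Matrix (Fin n) (Fin n) ℂ) (lam : ℂ) :
    lam ∈ spectrum ℂ M ↔ ∃ u : Fin n → ℂ, u ≠ 0 ∧ M *ᵥ u = lam • u := by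
  classical
  have key : ∀ u : Fin n → ℂ,
      ((algebraMap ℂ (Matrix (Fin n) (Fin n) ℂ) lam - M) *ᵥ u = 0) ↔ M *ᵥ u = lam • u := by
    intro u
    rw [Matrix.sub_mulVec, sub_eq_zero, Algebra.algebraMap_eq_smul_one,
      Matrix.smul_mulVec, Matrix.one_mulVec]
    exact eq_comm
  rw [spectrum.mem_iff, Matrix.isUnit_iff_isUnit_det, isUnit_iff_ne_zero, not_not,
    ← Matrix.exists_mulVec_eq_zero_iff]
  constructor
  · rintro ⟨u, hu, h⟩
    exact ⟨u, hu, (key u).mp h⟩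
  · rintro ⟨u, hu, h⟩
    exact ⟨u, hu, (key u).mpr h⟩

private lemma mul_vmv {n : ℕ} (M : Matrix (Fin n) (Fin n) ℂ) (u v : Fin n → ℂ) :
    M * vecMulVec u v = vecMulVec (M *ᵥ u) v := by
  ext a b
  simp only [Matrix.mul_apply, vecMulVec_apply, Matrix.mulVec, dotProduct]
  rw [Finset.sum_mul]
  exact Finset.sum_congr rfl fun c _ => by ring

private lemma vmv_mul {n : ℕ} (N : Matrix (Fin n) (Fin n) ℂ) (u v : Fin n → ℂ) :
    vecMulVec u v * N = vecMulVec u (Nᵀ *ᵥ v) := by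
  ext a b
  simp only [Matrix.mul_apply, vecMulVec_apply, Matrix.mulVec, dotProduct,
    Matrix.transpose_apply]
  rw [Finset.mul_sum]
  exact Finset.sum_congr rfl fun d _ => by ring

theorem stmt_4 (n p q : ℕ) (A B : Matrix (Fin n) (Fin n) ℂ)
    (α : ℕ → ℕ → ℂ)
    (G : Matrix (Fin n) (Fin n) ℂ → Matrix (Fin n) (Fin n) ℂ)
    (hG : ∀ X, G X = ∑ j ∈ Finset.range p, ∑ k ∈ Finset.range q,
      α j k • (A ^ j * X * B ^ k)) :
    ¬ Function.Injective G ↔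
      ∃ lam ∈ spectrum ℂ A, ∃ mu ∈ spectrum ℂ Bᵀ,
        ∑ j ∈ Finset.range p, ∑ k ∈ Finset.range q,
          α j k * lam ^ j * mu ^ k = 0 := by
  classical
  -- G as a linear map
  let Gl : Matrix (Fin n) (Fin n) ℂ →ₗ[ℂ] Matrix (Fin n) (Fin n) ℂ :=
  { toFun := G
    map_add' := by
      intro X Y
      simp [hG, mul_add, add_mul, smul_add, Finset.sum_add_distrib]
    map_smul' := by
      intro c X
      simp only [hG, RingHom.id_apply, Finset.smul_sum, mul_smul_comm, smul_mul_assoc]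
      refine Finset.sum_congr rfl fun j _ => Finset.sum_congr rfl fun k _ => ?_
      rw [smul_comm] }
  have hGl : ∀ X, Gl X = G X := fun _ => rfl
  have hG0 : G 0 = 0 := by simp [hG]
  constructor
  · intro hinj
    -- obtain a nonzero element of the kernel
    have hker : ∃ X0, X0 ≠ 0 ∧ G X0 = 0 := by
      rw [Function.not_injective_iff] at hinj
      obtain ⟨X, Y, hXY, hne⟩ := hinj
      refine ⟨X - Y, sub_ne_zero.mpr hne, ?_⟩
      have : Gl (X - Y) = Gl X - Gl Y := map_sub Gl X Y
      rw [hGl, hGl, hGl] at this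
      rw [this, hXY, sub_self]
    obtain ⟨X0, hX0ne, hX0⟩ := hker
    -- commutation relations
    have hGA : ∀ x, G (A * x) = A * G x := by
      intro x
      simp only [hG, Finset.mul_sum, mul_smul_comm]
      refine Finset.sum_congr rfl fun j _ => Finset.sum_congr rfl fun k _ => ?_
      congr 1
      simp only [← mul_assoc]
      rw [← pow_succ, ← pow_succ']
    have hGB : ∀ x, G (x * B) = G x * B := by
      intro x
      simp only [hG, Finset.sum_mul, smul_mul_assoc]
      refine Finset.sum_congr rfl fun j _ => Finset.sum_congr rfl fun k _ => ?_
      congr 1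
      simp only [mul_assoc]
      rw [← pow_succ', ← pow_succ]
    let LA := LinearMap.mulLeft ℂ A
    let RB := LinearMap.mulRight ℂ B
    -- first invariant subspace: kernel of Gl
    let V : Submodule ℂ (Matrix (Fin n) (Fin n) ℂ) := LinearMap.ker Gl
    have hmemV : ∀ x, x ∈ V ↔ G x = 0 := fun x => by
      simp [V, LinearMap.mem_ker, hGl]
    haveI : Nontrivial V := by
      refine ⟨⟨X0, (hmemV X0).mpr hX0⟩, 0, fun h => hX0ne ?_⟩
      simpa using Subtype.ext_iff.mp h
    have hVA : ∀ x ∈ V, LA x ∈ V := by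
      intro x hx
      rw [hmemV] at hx ⊢
      show G (A * x) = 0
      rw [hGA, hx, mul_zero]
    obtain ⟨lam, hlam⟩ := Module.End.exists_eigenvalue (LA.restrict hVA)
    obtain ⟨x1, hx1⟩ := hlam.exists_hasEigenvector
    have hx1eq : A * (x1 : Matrix (Fin n) (Fin n) ℂ) = lam • (x1 : Matrix (Fin n) (Fin n) ℂ) := by
      have := hx1.apply_eq_smul
      have h2 := congrArg (Subtype.val) this
      simpa [LinearMap.restrict_apply, LA, LinearMap.mulLeft_apply] using h2
    -- second invariant subspace
    let W : Submodule ℂ (Matrix (Fin n) (Fin n) ℂ) :=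
      V ⊓ LinearMap.ker (LA - lam • LinearMap.id)
    have hmemW : ∀ x, x ∈ W ↔ (G x = 0 ∧ A * x = lam • x) := by
      intro x
      simp only [W, Submodule.mem_inf, hmemV, LinearMap.mem_ker, LinearMap.sub_apply,
        LinearMap.smul_apply, LinearMap.id_apply, sub_eq_zero, LA, LinearMap.mulLeft_apply]
    haveI : Nontrivial W := by
      refine ⟨⟨(x1 : Matrix (Fin n) (Fin n) ℂ),
        (hmemW _).mpr ⟨(hmemV _).mp x1.2, hx1eq⟩⟩, 0, fun h => hx1.2 ?_⟩
      have h1 : (x1 : Matrix (Fin n) (Fin n) ℂ) = 0 := by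
        simpa using Subtype.ext_iff.mp h
      exact Subtype.ext (by simpa using h1)
    have hWB : ∀ x ∈ W, RB x ∈ W := by
      intro x hx
      rw [hmemW] at hx ⊢
      obtain ⟨h1, h2⟩ := hx
      constructor
      · show G (x * B) = 0
        rw [hGB, h1, zero_mul]
      · show A * (x * B) = lam • (x * B)
        rw [← mul_assoc, h2, smul_mul_assoc]
    obtain ⟨mu, hmu⟩ := Module.End.exists_eigenvalue (RB.restrict hWB)
    obtain ⟨x2, hx2⟩ := hmu.exists_hasEigenvector
    set X2 : Matrix (Fin n) (Fin n) ℂ := (x2 : Matrix (Fin n) (Fin n) ℂ) with hX2def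
    have hX2ne : X2 ≠ 0 := by
      intro h
      exact hx2.2 (Subtype.ext (by simpa [hX2def] using h))
    have hx2B : X2 * B = mu • X2 := by
      have := hx2.apply_eq_smul
      have h2 := congrArg (Subtype.val) this
      simpa [LinearMap.restrict_apply, RB, LinearMap.mulRight_apply] using h2
    obtain ⟨hGX2, hAX2⟩ := (hmemW X2).mp x2.2
    -- power relations
    have hApow : ∀ j, A ^ j * X2 = lam ^ j • X2 := by
      intro j
      induction j with
      | zero => simp
      | succ j ih =>
        rw [pow_succ', mul_assoc, ih, mul_smul_comm, hAX2, smul_smul, ← pow_succ]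
    have hBpow : ∀ k, X2 * B ^ k = mu ^ k • X2 := by
      intro k
      induction k with
      | zero => simp
      | succ k ih =>
        rw [pow_succ, ← mul_assoc, ih, smul_mul_assoc, hx2B, smul_smul, ← pow_succ]
    have hsum : (∑ j ∈ Finset.range p, ∑ k ∈ Finset.range q,
        α j k * lam ^ j * mu ^ k) • X2 = 0 := by
      rw [← hGX2, hG]
      rw [Finset.sum_smul]
      refine Finset.sum_congr rfl fun j _ => ?_
      rw [Finset.sum_smul]
      refine Finset.sum_congr rfl fun k _ => ?_
      have hterm : A ^ j * X2 * B ^ k = (lam ^ j * mu ^ k) • X2 := by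
        rw [hApow j, smul_mul_assoc, hBpow k, smul_smul]
      rw [hterm, smul_smul, mul_assoc]
    have hphi : (∑ j ∈ Finset.range p, ∑ k ∈ Finset.range q,
        α j k * lam ^ j * mu ^ k) = 0 := by
      rcases smul_eq_zero.mp hsum with h | h
      · exact h
      · exact absurd h hX2ne
    -- extract eigenvectors of A and Bᵀ from X2
    have hXentry : ∃ a b, X2 a b ≠ 0 := by
      by_contra h
      push_neg at h
      exact hX2ne (by ext a b; simpa using h a b)
    obtain ⟨a0, b0, hab⟩ := hXentry
    refine ⟨lam, ?_, mu, ?_, hphi⟩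
    · rw [spec_iff]
      refine ⟨fun i => X2 i b0, ?_, ?_⟩
      · intro h
        exact hab (congrFun h a0)
      · funext i
        have := congrFun (congrFun hAX2 i) b0
        simp only [Matrix.mul_apply, Matrix.smul_apply, smul_eq_mul] at this
        simpa [Matrix.mulVec, dotProduct] using this
    · rw [spec_iff]
      refine ⟨fun j => X2 a0 j, ?_, ?_⟩
      · intro h
        exact hab (congrFun h b0)
      · funext j
        have := congrFun (congrFun hx2B a0) j
        simp only [Matrix.mul_apply, Matrix.smul_apply, smul_eq_mul] at this
        simp only [Matrix.mulVec, dotProduct, Matrix.transpose_apply, Pi.smul_apply,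
          smul_eq_mul]
        rw [← this]
        exact Finset.sum_congr rfl fun d _ => by ring
  · rintro ⟨lam, hlam, mu, hmu, hphi⟩
    obtain ⟨u, hu, hAu⟩ := (spec_iff A lam).mp hlam
    obtain ⟨v, hv, hBv⟩ := (spec_iff Bᵀ mu).mp hmu
    set X : Matrix (Fin n) (Fin n) ℂ := vecMulVec u v with hXdef
    have hXne : X ≠ 0 := by
      obtain ⟨a, ha⟩ := Function.ne_iff.mp hu
      obtain ⟨b, hb⟩ := Function.ne_iff.mp hv
      intro h
      have := congrFun (congrFun h a) b
      simp only [hXdef, vecMulVec_apply, Matrix.zero_apply] at this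
      exact (mul_ne_zero (by simpa using ha) (by simpa using hb)) this
    have hApow : ∀ j, A ^ j *ᵥ u = lam ^ j • u := by
      intro j
      induction j with
      | zero => simp
      | succ j ih =>
        rw [pow_succ', ← Matrix.mulVec_mulVec, ih, Matrix.mulVec_smul, hAu, smul_smul,
          ← pow_succ]
    have hBpow : ∀ k, (Bᵀ) ^ k *ᵥ v = mu ^ k • v := by
      intro k
      induction k with
      | zero => simp
      | succ k ih =>
        rw [pow_succ', ← Matrix.mulVec_mulVec, ih, Matrix.mulVec_smul, hBv, smul_smul,
          ← pow_succ]
    have key : ∀ j k, A ^ j * X * B ^ k = (lam ^ j * mu ^ k) • X := by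
      intro j k
      rw [hXdef, mul_vmv, vmv_mul, Matrix.transpose_pow, hApow, hBpow]
      ext a b
      simp only [vecMulVec_apply, Pi.smul_apply, smul_eq_mul, Matrix.smul_apply]
      ring
    have hGX : G X = 0 := by
      rw [hG]
      have : ∀ j ∈ Finset.range p, ∀ k ∈ Finset.range q,
          α j k • (A ^ j * X * B ^ k) = (α j k * lam ^ j * mu ^ k) • X := by
        intro j _ k _
        rw [key, smul_smul, mul_assoc]
      calc ∑ j ∈ Finset.range p, ∑ k ∈ Finset.range q, α j k • (A ^ j * X * B ^ k)
          = ∑ j ∈ Finset.range p, ∑ k ∈ Finset.range q,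
            (α j k * lam ^ j * mu ^ k) • X := by
            exact Finset.sum_congr rfl fun j hj => Finset.sum_congr rfl fun k hk =>
              this j hj k hk
        _ = (∑ j ∈ Finset.range p, ∑ k ∈ Finset.range q,
            α j k * lam ^ j * mu ^ k) • X := by
            rw [Finset.sum_smul]
            exact Finset.sum_congr rfl fun j _ => by rw [Finset.sum_smul]
        _ = 0 := by rw [hphi, zero_smul]
    intro hinj
    exact hXne (hinj (by rw [hGX, hG0]))
end

section
/- Let A, B, C be square matrices with A ∈ Mₘ(ℝ), B ∈ Mₙ(ℝ), C an m×n matrix. The Sylvester equation AX - XB = C has a solution X if and only if the block matrices [[A, C],[0, B]] and [[A, 0],[0, B]] are similar (Roth's removal rule). -/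
open Matrix LinearMap FiniteDimensional Module

namespace RothAux

variable {m n : ℕ}

/-- Projection onto the bottom row of blocks, as a linear map. -/
def botBlocks (m n : ℕ) : Matrix (Fin m ⊕ Fin n) (Fin m ⊕ Fin n) ℝ →ₗ[ℝ]
    Matrix (Fin n) (Fin m) ℝ × Matrix (Fin n) (Fin n) ℝ where
  toFun Z := (Z.toBlocks₂₁, Z.toBlocks₂₂)
  map_add' _ _ := rfl
  map_smul' _ _ := rfl

theorem roth_reverse (A : Matrix (Fin m) (Fin m) ℝ)
    (B : Matrix (Fin n) (Fin n) ℝ) (C : Matrix (Fin m) (Fin n) ℝ)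
    (S : (Matrix (Fin m ⊕ Fin n) (Fin m ⊕ Fin n) ℝ)ˣ)
    (hS : (↑S⁻¹ : Matrix (Fin m ⊕ Fin n) (Fin m ⊕ Fin n) ℝ) *
        Matrix.fromBlocks A C 0 B * S = Matrix.fromBlocks A 0 0 B) :
    ∃ X : Matrix (Fin m) (Fin n) ℝ, A * X - X * B = C := by
  set M : Matrix (Fin m ⊕ Fin n) (Fin m ⊕ Fin n) ℝ := Matrix.fromBlocks A C 0 B with hM
  set N : Matrix (Fin m ⊕ Fin n) (Fin m ⊕ Fin n) ℝ := Matrix.fromBlocks A 0 0 B with hN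
  -- M * S = S * N
  have h1 : M * (S : Matrix _ _ ℝ) = (S : Matrix _ _ ℝ) * N := by
    conv_rhs => rw [← hS]
    rw [← mul_assoc, ← mul_assoc, Units.mul_inv, one_mul]
  set f₁ : Matrix (Fin m ⊕ Fin n) (Fin m ⊕ Fin n) ℝ →ₗ[ℝ] _ :=
    LinearMap.mulLeft ℝ M - LinearMap.mulRight ℝ N with hf₁
  set f₂ : Matrix (Fin m ⊕ Fin n) (Fin m ⊕ Fin n) ℝ →ₗ[ℝ] _ :=
    LinearMap.mulLeft ℝ N - LinearMap.mulRight ℝ N with hf₂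
  have mem1 : ∀ Z, Z ∈ LinearMap.ker f₁ ↔ M * Z = Z * N := by
    intro Z
    simp [hf₁, LinearMap.mem_ker, sub_eq_zero]
  have mem2 : ∀ Z, Z ∈ LinearMap.ker f₂ ↔ N * Z = Z * N := by
    intro Z
    simp [hf₂, LinearMap.mem_ker, sub_eq_zero]
  -- the two kernels have the same dimension
  set e : Matrix (Fin m ⊕ Fin n) (Fin m ⊕ Fin n) ℝ ≃ₗ[ℝ]
      Matrix (Fin m ⊕ Fin n) (Fin m ⊕ Fin n) ℝ :=
    LinearEquiv.ofLinear (LinearMap.mulLeft ℝ (↑S⁻¹ : Matrix _ _ ℝ))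
      (LinearMap.mulLeft ℝ (S : Matrix _ _ ℝ))
      (LinearMap.ext fun Z => by
        show (↑S⁻¹ : Matrix _ _ ℝ) * ((S : Matrix _ _ ℝ) * Z) = Z
        rw [← mul_assoc, Units.inv_mul, one_mul])
      (LinearMap.ext fun Z => by
        show (S : Matrix _ _ ℝ) * ((↑S⁻¹ : Matrix _ _ ℝ) * Z) = Z
        rw [← mul_assoc, Units.mul_inv, one_mul]) with he
  have hmap : (LinearMap.ker f₁).map e.toLinearMap = LinearMap.ker f₂ := by
    ext Z
    simp only [Submodule.mem_map]
    constructor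
    · rintro ⟨Y, hY, rfl⟩
      rw [mem1] at hY
      rw [mem2]
      show N * ((↑S⁻¹ : Matrix _ _ ℝ) * Y) = ((↑S⁻¹ : Matrix _ _ ℝ) * Y) * N
      have h2 : N * (↑S⁻¹ : Matrix _ _ ℝ) = (↑S⁻¹ : Matrix _ _ ℝ) * M := by
        rw [← hS, Units.mul_inv_cancel_right]
      rw [← mul_assoc, h2, mul_assoc, hY, ← mul_assoc]
    · intro hZ
      rw [mem2] at hZ
      refine ⟨(S : Matrix _ _ ℝ) * Z, ?_, ?_⟩
      · rw [mem1, ← mul_assoc, h1, mul_assoc, hZ, ← mul_assoc]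
      · show (↑S⁻¹ : Matrix _ _ ℝ) * ((S : Matrix _ _ ℝ) * Z) = Z
        rw [← mul_assoc, Units.inv_mul, one_mul]
  have hdim : finrank ℝ (LinearMap.ker f₁) = finrank ℝ (LinearMap.ker f₂) := by
    rw [← hmap, LinearEquiv.finrank_map_eq]
  -- restricted projections
  set π₁ := (botBlocks m n).domRestrict (LinearMap.ker f₁) with hπ₁
  set π₂ := (botBlocks m n).domRestrict (LinearMap.ker f₂) with hπ₂
  -- kernels of restricted projections are isomorphic
  have keyMN : ∀ Z : Matrix (Fin m ⊕ Fin n) (Fin m ⊕ Fin n) ℝ,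
      Z.toBlocks₂₁ = 0 → Z.toBlocks₂₂ = 0 → M * Z = N * Z := by
    intro Z h21 h22
    rw [← Matrix.fromBlocks_toBlocks Z, h21, h22, hM, hN,
      Matrix.fromBlocks_multiply, Matrix.fromBlocks_multiply]
    simp
  have hkerdim : finrank ℝ (LinearMap.ker π₁) = finrank ℝ (LinearMap.ker π₂) := by
    refine LinearEquiv.finrank_eq ?_
    refine
      { toFun := fun x => ⟨⟨(x : Matrix _ _ ℝ), ?_⟩, ?_⟩
        invFun := fun x => ⟨⟨(x : Matrix _ _ ℝ), ?_⟩, ?_⟩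
        map_add' := fun _ _ => rfl
        map_smul' := fun _ _ => rfl
        left_inv := fun _ => rfl
        right_inv := fun _ => rfl }
    · have hx : (((x : ↥(LinearMap.ker f₁)) : Matrix (Fin m ⊕ Fin n) (Fin m ⊕ Fin n) ℝ).toBlocks₂₁,
          ((x : ↥(LinearMap.ker f₁)) : Matrix (Fin m ⊕ Fin n) (Fin m ⊕ Fin n) ℝ).toBlocks₂₂) =
          ((0 : Matrix (Fin n) (Fin m) ℝ), (0 : Matrix (Fin n) (Fin n) ℝ)) := x.2
      have h21 : ((x : ↥(LinearMap.ker f₁)) : Matrix (Fin m ⊕ Fin n) (Fin m ⊕ Fin n) ℝ).toBlocks₂₁ = 0 :=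
        congrArg Prod.fst hx
      have h22 : ((x : ↥(LinearMap.ker f₁)) : Matrix (Fin m ⊕ Fin n) (Fin m ⊕ Fin n) ℝ).toBlocks₂₂ = 0 :=
        congrArg Prod.snd hx
      have hx1 := (mem1 _).mp (x : ↥(LinearMap.ker f₁)).2
      rw [mem2, ← keyMN _ h21 h22, hx1]
    · exact x.2
    · have hx : (((x : ↥(LinearMap.ker f₂)) : Matrix (Fin m ⊕ Fin n) (Fin m ⊕ Fin n) ℝ).toBlocks₂₁,
          ((x : ↥(LinearMap.ker f₂)) : Matrix (Fin m ⊕ Fin n) (Fin m ⊕ Fin n) ℝ).toBlocks₂₂) =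
          ((0 : Matrix (Fin n) (Fin m) ℝ), (0 : Matrix (Fin n) (Fin n) ℝ)) := x.2
      have h21 : ((x : ↥(LinearMap.ker f₂)) : Matrix (Fin m ⊕ Fin n) (Fin m ⊕ Fin n) ℝ).toBlocks₂₁ = 0 :=
        congrArg Prod.fst hx
      have h22 : ((x : ↥(LinearMap.ker f₂)) : Matrix (Fin m ⊕ Fin n) (Fin m ⊕ Fin n) ℝ).toBlocks₂₂ = 0 :=
        congrArg Prod.snd hx
      have hx2 := (mem2 _).mp (x : ↥(LinearMap.ker f₂)).2
      rw [mem1, keyMN _ h21 h22, hx2]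
    · exact x.2
  -- range π₁ ≤ range π₂
  have hle : LinearMap.range π₁ ≤ LinearMap.range π₂ := by
    rintro w ⟨⟨Z, hZ⟩, rfl⟩
    rw [mem1] at hZ
    -- extract bottom-row equations
    have hZ' := hZ
    rw [← Matrix.fromBlocks_toBlocks Z, hM, hN, Matrix.fromBlocks_multiply,
      Matrix.fromBlocks_multiply] at hZ'
    rw [Matrix.fromBlocks_inj] at hZ'
    obtain ⟨-, -, h3, h4⟩ := hZ'
    simp only [Matrix.zero_mul, Matrix.mul_zero, zero_add, add_zero] at h3 h4
    refine ⟨⟨Matrix.fromBlocks 0 0 Z.toBlocks₂₁ Z.toBlocks₂₂, ?_⟩, ?_⟩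
    · rw [mem2, hN, Matrix.fromBlocks_multiply, Matrix.fromBlocks_multiply]
      simp [h3, h4]
    · show ((Matrix.fromBlocks 0 0 Z.toBlocks₂₁ Z.toBlocks₂₂).toBlocks₂₁,
          (Matrix.fromBlocks 0 0 Z.toBlocks₂₁ Z.toBlocks₂₂).toBlocks₂₂) =
          (Z.toBlocks₂₁, Z.toBlocks₂₂)
      rw [Matrix.toBlocks_fromBlocks₂₁, Matrix.toBlocks_fromBlocks₂₂]
  -- ranges are equal by a dimension count
  have hr₁ := LinearMap.finrank_range_add_finrank_ker π₁
  have hr₂ := LinearMap.finrank_range_add_finrank_ker π₂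
  have hrange : LinearMap.range π₁ = LinearMap.range π₂ :=
    Submodule.eq_of_le_of_finrank_eq hle (by omega)
  -- (0, 1) is in range π₂, hence in range π₁
  have hmem : ((0 : Matrix (Fin n) (Fin m) ℝ), (1 : Matrix (Fin n) (Fin n) ℝ)) ∈
      LinearMap.range π₂ := by
    refine ⟨⟨Matrix.fromBlocks 0 0 0 1, ?_⟩, ?_⟩
    · rw [mem2, hN, Matrix.fromBlocks_multiply, Matrix.fromBlocks_multiply]
      simp
    · show ((Matrix.fromBlocks 0 0 0 (1 : Matrix (Fin n) (Fin n) ℝ)).toBlocks₂₁,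
          (Matrix.fromBlocks 0 0 0 (1 : Matrix (Fin n) (Fin n) ℝ)).toBlocks₂₂) = (0, 1)
      rw [Matrix.toBlocks_fromBlocks₂₁, Matrix.toBlocks_fromBlocks₂₂]
  rw [← hrange] at hmem
  obtain ⟨⟨Z, hZ⟩, hval⟩ := hmem
  rw [mem1] at hZ
  have h21 : Z.toBlocks₂₁ = 0 := congrArg Prod.fst hval
  have h22 : Z.toBlocks₂₂ = 1 := congrArg Prod.snd hval
  rw [← Matrix.fromBlocks_toBlocks Z, h21, h22, hM, hN, Matrix.fromBlocks_multiply,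
    Matrix.fromBlocks_multiply, Matrix.fromBlocks_inj] at hZ
  obtain ⟨-, h2, -, -⟩ := hZ
  simp only [Matrix.mul_zero, Matrix.zero_mul, Matrix.mul_one, add_zero, zero_add] at h2
  refine ⟨-Z.toBlocks₁₂, ?_⟩
  rw [Matrix.mul_neg, Matrix.neg_mul, sub_neg_eq_add, ← h2]
  abel

end RothAux

theorem stmt_5 (m n : ℕ) (A : Matrix (Fin m) (Fin m) ℝ)
    (B : Matrix (Fin n) (Fin n) ℝ) (C : Matrix (Fin m) (Fin n) ℝ) :
    (∃ X : Matrix (Fin m) (Fin n) ℝ, A * X - X * B = C) ↔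
    ∃ S : (Matrix (Fin m ⊕ Fin n) (Fin m ⊕ Fin n) ℝ)ˣ,
      (↑S⁻¹ : Matrix (Fin m ⊕ Fin n) (Fin m ⊕ Fin n) ℝ) *
        Matrix.fromBlocks A C 0 B * S = Matrix.fromBlocks A 0 0 B := by
  constructor
  · rintro ⟨X, hX⟩
    refine ⟨⟨Matrix.fromBlocks 1 (-X) 0 1, Matrix.fromBlocks 1 X 0 1,
      by simp [Matrix.fromBlocks_multiply], by simp [Matrix.fromBlocks_multiply]⟩, ?_⟩
    show Matrix.fromBlocks 1 X 0 1 * Matrix.fromBlocks A C 0 B *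
        Matrix.fromBlocks 1 (-X) 0 1 = Matrix.fromBlocks A 0 0 B
    rw [Matrix.fromBlocks_multiply, Matrix.fromBlocks_multiply, Matrix.fromBlocks_inj]
    refine ⟨by simp, ?_, by simp, by simp⟩
    simp only [Matrix.one_mul, Matrix.mul_one, Matrix.zero_mul, Matrix.mul_zero,
      add_zero, zero_add]
    rw [Matrix.mul_neg, ← hX]
    abel
  · rintro ⟨S, hS⟩
    exact RothAux.roth_reverse A B C S hS
end
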